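/- Let y be a nonnegative, nondecreasing function on [0, T], let C, ξ > 0 and η ≥ 0 be constants with y(T) ≤ η, and let h : [0,T] → ℝ be differentiable with h(0) = 0 and |h'(t)| ≤ C e^{-ξ t} y(t)(|h(t)| + y(t)) for all 0 ≤ t ≤ T. Then for all 0 ≤ t ≤ T, |h(t)| ≤ (e^{Cη/ξ} - 1) y(t) and |h'(t)| ≤ C e^{Cη/ξ} e^{-ξ t} y(t)². -/

import Mathlib

/-- Estimates on the modulation parameter h from the differential
inequality |h'(t)| ≤ C e^{-ξt} y(t)(|h(t)| + y(t)). -/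
theorem stmt_3 (T C ξ η : ℝ) (hT : 0 < T) (hC : 0 < C) (hξ : 0 < ξ) (hη : 0 ≤ η)
    (y : ℝ → ℝ) (hy0 : ∀ t ∈ Set.Icc 0 T, 0 ≤ y t)
    (hymono : ∀ s ∈ Set.Icc 0 T, ∀ t ∈ Set.Icc 0 T, s ≤ t → y s ≤ y t)
    (hyT : y T ≤ η)
    (h : ℝ → ℝ) (hdiff : Differentiable ℝ h) (h0 : h 0 = 0)
    (hineq : ∀ t ∈ Set.Icc 0 T,
      |deriv h t| ≤ C * Real.exp (-ξ * t) * y t * (|h t| + y t)) :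
    ∀ t ∈ Set.Icc 0 T,
      |h t| ≤ (Real.exp (C * η / ξ) - 1) * y t ∧
      |deriv h t| ≤ C * Real.exp (C * η / ξ) * Real.exp (-ξ * t) * (y t) ^ 2 := by
  intro t ht
  obtain ⟨ht0, htT⟩ := ht
  set M : ℝ := y t with hMdef
  have hM0 : 0 ≤ M := hy0 t ⟨ht0, htT⟩
  have hMη : M ≤ η :=
    le_trans (hymono t ⟨ht0, htT⟩ T ⟨hT.le, le_refl T⟩ htT) hyT
  set A : ℝ := (1 - Real.exp (-ξ * t)) / ξ with hAdef
  have hA0 : 0 ≤ A := by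
    apply div_nonneg _ hξ.le
    have : Real.exp (-ξ * t) ≤ 1 := by
      apply Real.exp_le_one_iff.mpr
      nlinarith
    linarith
  have hA1 : A ≤ 1 / ξ := by
    rw [hAdef]
    apply (div_le_div_iff_of_pos_right hξ).mpr
    have := Real.exp_pos (-ξ * t)
    linarith
  -- Key Grönwall claim
  have key : ∀ ε > (0:ℝ), |h t| ≤ (M + ε) * (Real.exp (C * (M + ε) * A) - 1) := by
    intro ε hε
    set N : ℝ := M + ε with hNdef
    have hN : 0 < N := by positivity
    set B : ℝ → ℝ := fun s => N * (Real.exp (C * N * (1 - Real.exp (-ξ * s)) / ξ) - 1)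
      with hBdef
    set B' : ℝ → ℝ := fun s => C * N * Real.exp (-ξ * s) * (B s + N) with hB'def
    have hBderiv : ∀ s, HasDerivAt B (B' s) s := by
      intro s
      have h1 : HasDerivAt (fun s : ℝ => -ξ * s) (-ξ) s := by
        simpa using (hasDerivAt_id s).const_mul (-ξ)
      have h2 : HasDerivAt (fun s : ℝ => Real.exp (-ξ * s))
          (Real.exp (-ξ * s) * (-ξ)) s := h1.exp
      have h3 : HasDerivAt (fun s : ℝ => C * N * (1 - Real.exp (-ξ * s)) / ξ)
          (C * N * Real.exp (-ξ * s)) s := by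
        have := ((h2.const_sub 1).const_mul (C * N)).div_const ξ
        refine this.congr_deriv ?_
        rw [div_eq_iff hξ.ne']
        ring
      have h4 := (h3.exp.const_mul N).sub_const N
      have e : (fun x => N * Real.exp (C * N * (1 - Real.exp (-ξ * x)) / ξ) - N) = B := by
        funext s; simp only [hBdef]; ring
      rw [← e]
      refine h4.congr_deriv ?_
      simp only [hB'def, hBdef]
      ring
    have hB0 : ∀ s, 0 ≤ s → 0 ≤ B s := by
      intro s hs
      have hexp : Real.exp (-ξ * s) ≤ 1 := by
        apply Real.exp_le_one_iff.mpr; nlinarith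
      have : (1:ℝ) ≤ Real.exp (C * N * (1 - Real.exp (-ξ * s)) / ξ) := by
        have h9 : 0 ≤ C * N * (1 - Real.exp (-ξ * s)) :=
          mul_nonneg (mul_nonneg hC.le hN.le) (by linarith)
        exact Real.one_le_exp (div_nonneg h9 hξ.le)
      simp only [hBdef]
      nlinarith
    have main : ∀ x ∈ Set.Icc (0:ℝ) t, |h x| ≤ B x := by
      have := image_norm_le_of_norm_deriv_right_lt_deriv_boundary
        (f := h) (f' := deriv h) (a := 0) (b := t)
        (hdiff.continuous.continuousOn)
        (fun x _ => (hdiff x).hasDerivAt.hasDerivWithinAt)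
        (B := B) (B' := B')
        (by simp [h0, hBdef]) hBderiv
        (fun x hx hfx => by
          have hx0 : 0 ≤ x := hx.1
          have hxT : x ≤ T := le_trans hx.2.le htT
          have hyx : y x ≤ M := hymono x ⟨hx0, hxT⟩ t ⟨ht0, htT⟩ hx.2.le
          have hyx0 : 0 ≤ y x := hy0 x ⟨hx0, hxT⟩
          have h5 := hineq x ⟨hx0, hxT⟩
          rw [← Real.norm_eq_abs] at h5
          apply lt_of_le_of_lt h5
          rw [Real.norm_eq_abs] at hfx
          rw [hfx]
          have hBx : 0 ≤ B x := hB0 x hx0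
          have hexp : 0 < Real.exp (-ξ * x) := Real.exp_pos _
          simp only [hB'def]
          have h6 : y x * (B x + y x) ≤ M * (B x + M) := by nlinarith
          have h7 : M * (B x + M) < N * (B x + N) := by
            simp only [hNdef]; nlinarith
          calc C * Real.exp (-ξ * x) * y x * (B x + y x)
              ≤ C * Real.exp (-ξ * x) * (M * (B x + M)) := by
                rw [mul_assoc]
                apply mul_le_mul_of_nonneg_left _ (by positivity)
                exact h6
            _ < C * Real.exp (-ξ * x) * (N * (B x + N)) := by
                apply mul_lt_mul_of_pos_left h7 (by positivity)
            _ = C * N * Real.exp (-ξ * x) * (B x + N) := by ring)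
      intro x hx
      have := this hx
      rwa [Real.norm_eq_abs] at this
    have hrw : C * N * A = C * N * (1 - Real.exp (-ξ * t)) / ξ := by
      rw [hAdef]; ring
    rw [hrw]
    exact main t ⟨ht0, le_refl t⟩
  -- pass to the limit ε → 0⁺
  have hlim : |h t| ≤ M * (Real.exp (C * M * A) - 1) := by
    have hcont : Filter.Tendsto (fun ε : ℝ => (M + ε) * (Real.exp (C * (M + ε) * A) - 1))
        (nhdsWithin 0 (Set.Ioi 0)) (nhds (M * (Real.exp (C * M * A) - 1))) := by
      have hc1 : Continuous (fun ε : ℝ => M + ε) := continuous_const.add continuous_id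
      have : Continuous (fun ε : ℝ => (M + ε) * (Real.exp (C * (M + ε) * A) - 1)) :=
        hc1.mul ((((continuous_const.mul hc1).mul continuous_const).rexp).sub continuous_const)
      have h8 := this.tendsto 0
      simp only [add_zero] at h8
      exact h8.mono_left nhdsWithin_le_nhds
    exact ge_of_tendsto hcont (eventually_nhdsWithin_of_forall key)
  -- The exponent bound
  have hexp1 : C * M * A ≤ C * η / ξ := by
    have h1 : M * A ≤ η * (1 / ξ) := by
      apply mul_le_mul hMη hA1 hA0 hη
    calc C * M * A = C * (M * A) := by ring
      _ ≤ C * (η * (1 / ξ)) := by nlinarith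
      _ = C * η / ξ := by ring
  have habs : |h t| ≤ (Real.exp (C * η / ξ) - 1) * M := by
    calc |h t| ≤ M * (Real.exp (C * M * A) - 1) := hlim
      _ ≤ M * (Real.exp (C * η / ξ) - 1) := by
          apply mul_le_mul_of_nonneg_left _ hM0
          have := Real.exp_le_exp.mpr hexp1
          linarith
      _ = (Real.exp (C * η / ξ) - 1) * M := by ring
  refine ⟨habs, ?_⟩
  have h5 := hineq t ⟨ht0, htT⟩
  apply le_trans h5
  have hexp : 0 < Real.exp (-ξ * t) := Real.exp_pos _
  have hE1 : (1:ℝ) ≤ Real.exp (C * η / ξ) := by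
    rw [← Real.exp_zero]; apply Real.exp_le_exp.mpr; positivity
  calc C * Real.exp (-ξ * t) * y t * (|h t| + y t)
      ≤ C * Real.exp (-ξ * t) * M * ((Real.exp (C * η / ξ) - 1) * M + M) := by
        apply mul_le_mul_of_nonneg_left _ (by positivity)
        linarith
    _ = C * Real.exp (C * η / ξ) * Real.exp (-ξ * t) * M ^ 2 := by ring
    _ = C * Real.exp (C * η / ξ) * Real.exp (-ξ * t) * (y t) ^ 2 := by rw [hMdef]
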